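/- arXiv:1411.6739 — 2 statements merged into one kernel-verified Lean document; each statement's English description precedes it below -/
import Mathlib

section
/- Let R be upper triangular with R*R = T·I − s s*, s having unit-modulus entries, and suppose |R_{i,i}|² = T − T/(T−(i−1)) for all i. Then for any unit-modulus sequence s̃ ≠ s whose largest differing index i satisfies i ≤ T−1, the partial metric M_{s̃,i} = ∑_{j=i}^{T} |∑_{k=j}^{T} R_{j,k} s̃_k|² is strictly positive. -/
open Matrix

/-- If the diagonal of the Cholesky factor `R` of `T·I − s s*` satisfies
`|R_{i,i}|² = T − T/(T−(i−1))` (with `i` one-based, so `i − 1` is the `Fin`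
value), then for any unit-modulus `s̃ ≠ s` whose largest differing index `i`
satisfies `i ≤ T−1`, the partial metric `∑_{j=i}^{T} |∑_{k=j}^{T} R_{j,k} s̃_k|²`
is strictly positive. -/
theorem stmt7 (T : ℕ) (hT : 2 ≤ T) (s stil : Fin T → ℂ)
    (hs : ∀ k, ‖s k‖ = 1)
    (hstil : ∀ k, ‖stil k‖ = 1)
    (R : Matrix (Fin T) (Fin T) ℂ)
    (hupper : ∀ i j : Fin T, j < i → R i j = 0)
    (hR : Rᴴ * R = (T : ℂ) • (1 : Matrix (Fin T) (Fin T) ℂ) - vecMulVec s (star s))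
    (hdiag : ∀ i : Fin T, ‖R i i‖ ^ 2 = (T : ℝ) - (T : ℝ) / ((T : ℝ) - (i : ℕ)))
    (i : Fin T) (hi : stil i ≠ s i) (hmax : ∀ k : Fin T, i < k → stil k = s k)
    (hiT : (i : ℕ) + 1 ≤ T - 1) :
    0 < ∑ j ∈ Finset.Ici i, ‖∑ k ∈ Finset.Ici j, R j k * stil k‖ ^ 2 := by
  have hs1 : ∀ k, (starRingEnd ℂ) (s k) * s k = 1 := by
    intro k
    rw [Complex.conj_mul']
    simp [hs k]
  -- (Rᴴ R) s = 0
  have h0 : (Rᴴ * R) *ᵥ s = 0 := by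
    rw [hR]
    ext j
    simp only [Matrix.mulVec, dotProduct, Matrix.sub_apply, Matrix.smul_apply,
      Matrix.one_apply, Matrix.vecMulVec_apply, sub_mul, Finset.sum_sub_distrib,
      smul_eq_mul, mul_ite, ite_mul, zero_mul, mul_one, mul_zero, Finset.sum_ite_eq,
      Finset.mem_univ, if_true, Pi.zero_apply, Pi.star_apply, Complex.star_def,
      mul_assoc, hs1, Finset.sum_const, Finset.card_univ, Fintype.card_fin, nsmul_eq_mul]
    ring
  -- R s = 0
  have hv : ∀ j, (R *ᵥ s) j = 0 := by
    have hdp : star (R *ᵥ s) ⬝ᵥ (R *ᵥ s) = 0 := by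
      rw [Matrix.star_mulVec, ← Matrix.dotProduct_mulVec, Matrix.mulVec_mulVec, h0]
      simp
    have hsum : ∑ j, Complex.normSq ((R *ᵥ s) j) = 0 := by
      have : ((∑ j, Complex.normSq ((R *ᵥ s) j) : ℝ) : ℂ) = star (R *ᵥ s) ⬝ᵥ (R *ᵥ s) := by
        push_cast
        simp [dotProduct, Pi.star_apply, Complex.conj_mul']
        norm_cast
        simp [Complex.sq_norm]
      rw [hdp] at this
      exact_mod_cast this
    intro j
    have := (Finset.sum_eq_zero_iff_of_nonneg (fun j _ => Complex.normSq_nonneg _)).mp hsum j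
      (Finset.mem_univ j)
    exact Complex.normSq_eq_zero.mp this
  have hcol : ∀ j : Fin T, ∑ k ∈ Finset.Ici j, R j k * s k = 0 := by
    intro j
    have := hv j
    rw [Matrix.mulVec, dotProduct] at this
    rw [← this]
    apply Finset.sum_subset (Finset.subset_univ _)
    intro k _ hk
    rw [hupper j k (by simpa using hk), zero_mul]
  -- the i-th term
  have hterm : ∑ k ∈ Finset.Ici i, R i k * stil k = R i i * (stil i - s i) := by
    have hdiff : ∑ k ∈ Finset.Ici i, R i k * (stil k - s k) = R i i * (stil i - s i) := by
      rw [Finset.sum_eq_single i]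
      · intro b hb hbne
        rw [hmax b (lt_of_le_of_ne (Finset.mem_Ici.mp hb) (Ne.symm hbne)), sub_self, mul_zero]
      · intro h; exact absurd (Finset.mem_Ici.mpr le_rfl) h
    calc ∑ k ∈ Finset.Ici i, R i k * stil k
        = ∑ k ∈ Finset.Ici i, R i k * (stil k - s k) + ∑ k ∈ Finset.Ici i, R i k * s k := by
          rw [← Finset.sum_add_distrib]; congr 1; ext k; ring
      _ = R i i * (stil i - s i) := by rw [hdiff, hcol, add_zero]
  -- positivity of the i-th term
  have hRii : 0 < ‖R i i‖ ^ 2 := by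
    rw [hdiag i]
    have h2 : (i : ℕ) ≤ T - 2 := by omega
    have hTi : (2 : ℝ) ≤ (T : ℝ) - (i : ℕ) := by
      have : (i : ℕ) + 2 ≤ T := by omega
      push_cast
      have := (Nat.cast_le (α := ℝ)).mpr this
      push_cast at this
      linarith
    have hTpos : (0 : ℝ) < T := by positivity
    have : (T : ℝ) / ((T : ℝ) - (i : ℕ)) < T := by
      apply div_lt_self hTpos
      linarith
    linarith
  have hipos : 0 < ‖∑ k ∈ Finset.Ici i, R i k * stil k‖ ^ 2 := by
    rw [hterm, norm_mul, mul_pow]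
    have hd : 0 < ‖stil i - s i‖ ^ 2 := by
      have hne : stil i - s i ≠ 0 := sub_ne_zero.mpr hi
      exact pow_pos (norm_pos_iff.mpr hne) 2
    exact mul_pos hRii hd
  exact Finset.sum_pos' (fun j _ => by positivity)
    ⟨i, Finset.mem_Ici.mpr le_rfl, hipos⟩
end

section
/- For a fixed unit-modulus transmitted sequence s ∈ Ω^T and any sequence s̃ ∈ Ω^T not a scalar-phase equal to s (here with last symbol fixed, s̃ ≠ s), the quadratic form s̃*(ρ_E I − E[X*X]/N)s̃ = T² − |s̃*s|² is strictly positive, where ρ_E = T + σ². -/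
open Matrix

/-- For unit-modulus `s, s̃` with the phase reference fixed (`s̃_T = s_T`) and
`s̃ ≠ s`, the quadratic form `s̃*(ρ_E I − E[X*X]/N) s̃ = s̃*(T·I − s s*) s̃`
equals `T² − |s̃*s|²` and is strictly positive (here `ρ_E = T + σ²` and
`E[X*X]/N = s s* + σ²·I`). -/
theorem stmt9 (T : ℕ) (hT : 1 ≤ T) (σsq : ℝ) (hσ : 0 ≤ σsq)
    (s stil : Fin T → ℂ)
    (hs : ∀ k, ‖s k‖ = 1)
    (hstil : ∀ k, ‖stil k‖ = 1)
    (hlast : stil ⟨T - 1, by omega⟩ = s ⟨T - 1, by omega⟩)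
    (hne : stil ≠ s) :
    star stil ⬝ᵥ
        ((((T : ℝ) + σsq : ℝ) • (1 : Matrix (Fin T) (Fin T) ℂ)
            - (vecMulVec s (star s) + (σsq : ℂ) • (1 : Matrix (Fin T) (Fin T) ℂ)))
          *ᵥ stil)
      = ((T : ℝ) ^ 2 - ‖∑ k, (starRingEnd ℂ) (stil k) * s k‖ ^ 2 : ℝ)
    ∧ 0 < (T : ℝ) ^ 2 - ‖∑ k, (starRingEnd ℂ) (stil k) * s k‖ ^ 2 := by
  set z : ℂ := ∑ k, (starRingEnd ℂ) (stil k) * s k with hz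
  set L : Fin T := ⟨T - 1, by omega⟩ with hL
  set t : Fin T → ℂ := fun k => (starRingEnd ℂ) (stil k) * s k with ht
  have hconjmul : ∀ w : ℂ, ‖w‖ = 1 → (starRingEnd ℂ) w * w = 1 := by
    intro w hw
    have hn : ‖w‖ = 1 := by simpa using hw
    rw [Complex.conj_mul', hn]
    norm_num
  have htn : ∀ k, ‖t k‖ = 1 := by
    intro k
    rw [ht]
    simp [_root_.map_mul, hs k, hstil k]
  have htL : t L = 1 := by
    have h0 : t L = (starRingEnd ℂ) (s L) * s L := by rw [ht]; simp [hlast]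
    rw [h0, hconjmul _ (hs L)]
  obtain ⟨j, hj⟩ : ∃ j, stil j ≠ s j := by
    by_contra h
    push_neg at h
    exact hne (funext h)
  have hjL : j ≠ L := fun h => hj (by rw [h]; exact hlast)
  have htj : t j ≠ 1 := by
    intro h
    apply hj
    have h2 : stil j * t j = stil j := by rw [h, mul_one]
    rw [ht] at h2
    simp only at h2
    rw [← mul_assoc, Complex.mul_conj'] at h2
    have hn : ‖stil j‖ = 1 := by simpa using hstil j
    rw [hn] at h2
    simpa using h2.symm
  have hT2 : 2 ≤ T := by
    by_contra h
    push_neg at h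
    apply hjL
    apply Fin.ext
    have := j.isLt
    have hLv : (L : ℕ) = T - 1 := rfl
    omega
  have habsj : ‖t j‖ = 1 := by simpa using htn j
  have hrej : (t j).re < 1 := by
    rcases lt_or_eq_of_le ((Complex.re_le_norm (t j)).trans_eq habsj) with h | h
    · exact h
    · exfalso
      apply htj
      have h2 := Complex.sq_norm (t j)
      rw [habsj, Complex.normSq_apply, h] at h2
      have him : (t j).im = 0 := by nlinarith
      exact Complex.ext h him
  have hpair : ‖t j + t L‖ < 2 := by
    rw [htL]
    have hnsq : Complex.normSq (t j) = 1 := by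
      rw [← Complex.sq_norm, habsj]; norm_num
    have h1 : ‖t j + 1‖ ^ 2 = Complex.normSq (t j + 1) := by
      rw [Complex.sq_norm]
    have e : Complex.normSq (t j + 1) = Complex.normSq (t j) + 2 * (t j).re + 1 := by
      simp [Complex.normSq_apply]; ring
    nlinarith [norm_nonneg (t j + 1)]
  have hA : ∀ (A : Finset (Fin T)), ‖∑ k ∈ A, t k‖ ≤ A.card := by
    intro A
    calc ‖∑ k ∈ A, t k‖ ≤ ∑ k ∈ A, ‖t k‖ := norm_sum_le _ _
    _ = A.card := by simp [htn]
  have hzlt : ‖z‖ < T := by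
    have hLmem : L ∈ Finset.univ.erase j := Finset.mem_erase.mpr ⟨hjL.symm, Finset.mem_univ L⟩
    have hsplit : z = (t j + t L) + ∑ k ∈ (Finset.univ.erase j).erase L, t k := by
      rw [hz, ← Finset.add_sum_erase _ _ (Finset.mem_univ j), ← Finset.add_sum_erase _ _ hLmem]
      ring
    have hcardn : ((Finset.univ.erase j).erase L).card = T - 2 := by
      rw [Finset.card_erase_of_mem hLmem, Finset.card_erase_of_mem (Finset.mem_univ j)]
      simp only [Finset.card_univ, Fintype.card_fin]
      omega
    have hcard : (((Finset.univ.erase j).erase L).card : ℝ) = (T : ℝ) - 2 := by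
      rw [hcardn, Nat.cast_sub hT2]; norm_num
    have hb := hA ((Finset.univ.erase j).erase L)
    rw [hcard] at hb
    calc ‖z‖ ≤ ‖t j + t L‖ + ‖∑ k ∈ (Finset.univ.erase j).erase L, t k‖ := by
          rw [hsplit]; exact norm_add_le _ _
    _ < 2 + ((T : ℝ) - 2) := by linarith
    _ = T := by ring
  have hpos : 0 < (T : ℝ) ^ 2 - ‖z‖ ^ 2 := by nlinarith [norm_nonneg z]
  refine ⟨?_, hpos⟩
  have h1 : star stil ⬝ᵥ stil = (T : ℂ) := by
    simp only [dotProduct, Pi.star_apply, RCLike.star_def]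
    have : ∀ k : Fin T, (starRingEnd ℂ) (stil k) * stil k = 1 :=
      fun k => hconjmul _ (hstil k)
    simp [this]
  have h2 : star stil ⬝ᵥ (vecMulVec s (star s) *ᵥ stil) = z * (starRingEnd ℂ) z := by
    simp only [vecMulVec, mulVec, dotProduct, of_apply, Pi.star_apply, RCLike.star_def]
    rw [hz, map_sum]
    simp only [_root_.map_mul, Complex.conj_conj, Finset.mul_sum, Finset.sum_mul]
    rw [Finset.sum_comm]
    congr 1; ext i; congr 1; ext k; ring
  rw [sub_mulVec, add_mulVec, smul_mulVec, smul_mulVec, one_mulVec,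
    dotProduct_sub, dotProduct_add, dotProduct_smul, dotProduct_smul, h1, h2,
    Complex.mul_conj']
  simp only [Complex.real_smul, smul_eq_mul]
  push_cast
  ring
end
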